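/- Let X be a geodesic metric space with two direct product decompositions Y × Ȳ = X = Z × Z̄. Let x ∈ X be a point, set F_x = Y_x ∩ Z_x, and let T = P^Y(F_x) × Ȳ ⊂ Y × Ȳ = X. Then the image P^Z(T) ⊂ Z splits as a direct product P^Z(T) = P^Z(F_x) × P^Z(Ȳ_x). -/
import Mathlib


universe u

/-- A metric space bundled with its metric structure. -/
structure BundledMetricSpace : Type (u + 1) where
  carrier : Type u
  [str : MetricSpace carrier]

attribute [instance] BundledMetricSpace.str

/-- A real normed vector space bundled with its structure. -/
structure BundledNormedSpace : Type (u + 1) where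
  carrier : Type u
  [grp : NormedAddCommGroup carrier]
  [mod : NormedSpace ℝ carrier]

attribute [instance] BundledNormedSpace.grp BundledNormedSpace.mod

/-- `(pY, pZ)` realize `X` as the direct (ℓ²-) product of the metric spaces `Y` and `Z`:
the joint map is a surjection (hence, by the distance identity, an isometry onto
the product with the metric `d((y,z),(y',z')) = sqrt (d(y,y')² + d(z,z')²)`). -/
def IsProdDecomp {X Y Z : Type*} [MetricSpace X] [MetricSpace Y] [MetricSpace Z]
    (pY : X → Y) (pZ : X → Z) : Prop :=
  Function.Surjective (fun x => (pY x, pZ x)) ∧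
    ∀ x x' : X, dist x x' ^ 2 = dist (pY x) (pY x') ^ 2 + dist (pZ x) (pZ x') ^ 2

/-- Given the projection `pZ : X → Z` onto the complementary factor of a product
decomposition, `fiberThrough pZ x` is the fiber through `x` of the other factor,
i.e. `pZ⁻¹(pZ x)`. -/
def fiberThrough {X Z : Type*} (pZ : X → Z) (x : X) : Set X :=
  {x' : X | pZ x' = pZ x}

/-- A metric space is geodesic if any two points are joined by an isometrically
embedded interval. -/
def IsGeodesicSpace (X : Type*) [MetricSpace X] : Prop :=
  ∀ x y : X, ∃ γ : ℝ → X, γ 0 = x ∧ γ (dist x y) = y ∧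
    ∀ s ∈ Set.Icc (0 : ℝ) (dist x y), ∀ t ∈ Set.Icc (0 : ℝ) (dist x y),
      dist (γ s) (γ t) = |s - t|

/-- The affine rank of a metric space: the supremum of the topological dimensions
(= dimensions of the affine hulls) of affine spaces (= linearly convex subsets of
normed real vector spaces) admitting an isometric embedding into `X`. -/
noncomputable def affRank (X : Type*) [MetricSpace X] : ℕ∞ :=
  sSup {n : ℕ∞ | ∃ (V : BundledNormedSpace.{0}) (C : Set V.carrier) (f : C → X),
    FiniteDimensional ℝ V.carrier ∧ Convex ℝ C ∧ Isometry f ∧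
    n = (Module.finrank ℝ (vectorSpan ℝ C) : ℕ∞)}

/-- A metric space is affine if it is isometric to a linearly convex subset of a
real normed vector space. -/
def IsAffineMetricSpace (T : Type u) [MetricSpace T] : Prop :=
  ∃ (V : BundledNormedSpace.{u}) (C : Set V.carrier),
    Convex ℝ C ∧ Nonempty (T ≃ᵢ ↥C)

/-- A metric space is a finite-dimensional affine metric space if it is isometric to a
linearly convex subset of a finite-dimensional real normed vector space. -/
def IsFinDimAffine (T : Type*) [MetricSpace T] : Prop :=
  ∃ (V : BundledNormedSpace.{0}) (C : Set V.carrier),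
    FiniteDimensional ℝ V.carrier ∧ Convex ℝ C ∧ Nonempty (T ≃ᵢ ↥C)

/-- A metric space is irreducible if in every direct product decomposition one of the
factors is a single point (i.e. has at most one point). -/
def IrreducibleMS (Z : Type u) [MetricSpace Z] : Prop :=
  ∀ (W W' : Type u) [MetricSpace W] [MetricSpace W'] (q : Z → W) (q' : Z → W'),
    IsProdDecomp q q' → Subsingleton W ∨ Subsingleton W'

/-- `p` realizes `X` as the direct (ℓ²-) product of the finite family of metric
spaces `Y i`. -/
def IsMultiDecomp {X : Type u} [MetricSpace X] {n : ℕ} (Y : Fin n → BundledMetricSpace.{u})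
    (p : ∀ i, X → (Y i).carrier) : Prop :=
  Function.Surjective (fun x => fun i => p i x) ∧
    ∀ x x' : X, dist x x' ^ 2 = ∑ i, dist (p i x) (p i x') ^ 2

/-- The `Y i`-fiber through `x` of a multiple product decomposition: the set of points
having the same projections as `x` to all the other factors. -/
def mfiber {X : Type u} {n : ℕ} {Y : Fin n → BundledMetricSpace.{u}}
    (p : ∀ i, X → (Y i).carrier) (i : Fin n) (x : X) : Set X :=
  {x' : X | ∀ j, j ≠ i → p j x' = p j x}

/-- A decomposition `X = Y₀ × Y₁ × ⋯ × Yₙ` as in the de Rham decomposition theorem: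
`Y₀` is a Euclidean space `ℝ^m` (possibly a point) and each `Y i`, `i ≥ 1`, is an
irreducible metric space with more than one point, not isometric to the real line. -/
def IsDeRhamDecomp {X : Type u} [MetricSpace X] {n : ℕ} (m : ℕ)
    (Y : Fin (n + 1) → BundledMetricSpace.{u}) (p : ∀ i, X → (Y i).carrier) : Prop :=
  IsMultiDecomp Y p ∧ Nonempty ((Y 0).carrier ≃ᵢ EuclideanSpace ℝ (Fin m)) ∧
    ∀ i, i ≠ 0 → IrreducibleMS (Y i).carrier ∧ Nontrivial (Y i).carrier ∧
      IsEmpty ((Y i).carrier ≃ᵢ ℝ)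

section helper

variable {X Y Ybar Z Zbar : Type*} [MetricSpace X] [MetricSpace Y] [MetricSpace Ybar]
  [MetricSpace Z] [MetricSpace Zbar]
variable {pY : X → Y} {pYbar : X → Ybar} {pZ : X → Z} {pZbar : X → Zbar}

lemma core_pZbar (hYY : IsProdDecomp pY pYbar) (hZZ : IsProdDecomp pZ pZbar)
    (x xa u w : X) (hxa1 : pYbar xa = pYbar x) (hxa2 : pZbar xa = pZbar x)
    (hu : pY u = pY x) (hw1 : pY w = pY xa) (hw2 : pYbar w = pYbar u) :
    pZbar w = pZbar u := by
  obtain ⟨v, hv⟩ := hZZ.1 (pZ u, pZbar w)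
  have hv1 : pZ v = pZ u := congrArg Prod.fst hv
  have hv2 : pZbar v = pZbar w := congrArg Prod.snd hv
  have Ea := hYY.2 u xa
  have Eb := hZZ.2 u xa
  have Ec := hYY.2 x u
  have Ed := hZZ.2 x u
  have Ee := hYY.2 u w
  have Ef := hZZ.2 u w
  have Eg := hYY.2 v x
  have Eh := hZZ.2 v x
  have Ei := hYY.2 v xa
  have Ej := hZZ.2 v xa
  have Ek := hYY.2 v u
  have El := hZZ.2 v u
  have Em := hYY.2 v w
  have En := hZZ.2 v w
  rw [hu, hxa1] at Ea
  rw [hxa2] at Eb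
  rw [hu] at Ec
  rw [hu, hw1, hw2] at Ee
  rw [hxa1] at Ei
  rw [hxa2, hv1, hv2] at Ej
  rw [hv1, hv2] at Eh El En
  rw [hu] at Ek
  rw [hw1, hw2] at Em
  simp only [dist_self] at Ec Ee El En
  have B1 : dist (pYbar u) (pYbar x) ^ 2 = dist (pYbar x) (pYbar u) ^ 2 := by rw [dist_comm]
  have B2 : dist (pZbar u) (pZbar x) ^ 2 = dist (pZbar x) (pZbar u) ^ 2 := by rw [dist_comm]
  have B3 : dist (pZ u) (pZ x) ^ 2 = dist (pZ x) (pZ u) ^ 2 := by rw [dist_comm]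
  have B4 : dist (pZbar u) (pZbar w) ^ 2 = dist (pZbar w) (pZbar u) ^ 2 := by rw [dist_comm]
  have hP : dist (pZbar w) (pZbar u) ^ 2 = 0 := by
    linarith [Ea, Eb, Ec, Ed, Ee, Ef, Eg, Eh, Ei, Ej, Ek, El, Em, En, B1, B2, B3, B4]
  exact dist_eq_zero.mp ((pow_eq_zero_iff (two_ne_zero)).mp hP)

lemma key_dist (hYY : IsProdDecomp pY pYbar) (hZZ : IsProdDecomp pZ pZbar)
    (x xa xa' u u' w w' : X)
    (h1 : pYbar xa = pYbar x) (h2 : pZbar xa = pZbar x)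
    (h1' : pYbar xa' = pYbar x) (h2' : pZbar xa' = pZbar x)
    (hu : pY u = pY x) (hu' : pY u' = pY x)
    (hw1 : pY w = pY xa) (hw2 : pYbar w = pYbar u)
    (hw1' : pY w' = pY xa') (hw2' : pYbar w' = pYbar u') :
    dist (pZ w) (pZ w') ^ 2 = dist (pZ xa) (pZ xa') ^ 2 + dist (pZ u) (pZ u') ^ 2 := by
  have cw := core_pZbar hYY hZZ x xa u w h1 h2 hu hw1 hw2
  have cw' := core_pZbar hYY hZZ x xa' u' w' h1' h2' hu' hw1' hw2'
  have A1 := hYY.2 w w'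
  have A2 := hZZ.2 w w'
  have A3 := hYY.2 xa xa'
  have A4 := hZZ.2 xa xa'
  have A5 := hYY.2 u u'
  have A6 := hZZ.2 u u'
  rw [hw1, hw1', hw2, hw2'] at A1
  rw [cw, cw'] at A2
  rw [h1, h1'] at A3
  rw [h2, h2'] at A4
  rw [hu, hu'] at A5
  simp only [dist_self] at A3 A4 A5
  linarith [A1, A2, A3, A4, A5, A6]

end helper

/-- **Lemma 5.1**: let `X` be a geodesic metric space with two direct product
decompositions `Y × Ȳ = X = Z × Z̄`, let `x ∈ X`, `F_x = Y_x ∩ Z_x` and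
`T = P^Y(F_x) × Ȳ ⊆ X`. Then the image `P^Z(T) ⊆ Z` splits as the direct product
`P^Z(T) = P^Z(F_x) × P^Z(Ȳ_x)`, the two factors being the subsets `P^Z(F_x)`
and `P^Z(Ȳ_x)` of `P^Z(T)`, which are the fibers through the point `P^Z(x)`. -/
theorem proj_of_product_with_fiber_splits {X Y Ybar Z Zbar : Type u}
    [MetricSpace X] [MetricSpace Y] [MetricSpace Ybar] [MetricSpace Z] [MetricSpace Zbar]
    (pY : X → Y) (pYbar : X → Ybar) (pZ : X → Z) (pZbar : X → Zbar)
    (hYY : IsProdDecomp pY pYbar) (hZZ : IsProdDecomp pZ pZbar)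
    (hgeo : IsGeodesicSpace X) (x : X) :
    ∀ (hz₁ : pZ x ∈ pZ '' (fiberThrough pYbar x ∩ fiberThrough pZbar x))
      (hz₂ : pZ x ∈ pZ '' fiberThrough pY x),
    ∃ e : ↥(pZ '' (fiberThrough pYbar x ∩ fiberThrough pZbar x)) ×
          ↥(pZ '' fiberThrough pY x) →
          ↥(pZ '' {x' : X |
              pY x' ∈ pY '' (fiberThrough pYbar x ∩ fiberThrough pZbar x)}),
      Function.Bijective e ∧
      (∀ u v, dist (e u) (e v) ^ 2 = dist u.1 v.1 ^ 2 + dist u.2 v.2 ^ 2) ∧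
      (∀ a, ((e (a, ⟨pZ x, hz₂⟩) : Z) = (a : Z))) ∧
      (∀ b, ((e (⟨pZ x, hz₁⟩, b) : Z) = (b : Z))) := by
  intro hz₁ hz₂
  classical
  -- choose a canonical point `xa a` of `F` above each `a` in `pZ '' F`
  have haF : ∀ a : ↥(pZ '' (fiberThrough pYbar x ∩ fiberThrough pZbar x)),
      ∃ p : X, pYbar p = pYbar x ∧ pZbar p = pZbar x ∧ pZ p = (a : Z) := by
    rintro ⟨a, p, hp, rfl⟩
    exact ⟨p, hp.1, hp.2, rfl⟩
  choose xa hxa1 hxa2 hxa3 using haF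
  -- choose a canonical point `ub b` of the `Ybar`-fiber above each `b`
  have hbF : ∀ b : ↥(pZ '' fiberThrough pY x),
      ∃ p : X, pY p = pY x ∧ pZ p = (b : Z) := by
    rintro ⟨b, p, hp, rfl⟩
    exact ⟨p, hp, rfl⟩
  choose ub hub1 hub2 using hbF
  -- the point with coordinates (pY (xa a), pYbar (ub b))
  have hWex : ∀ a b, ∃ w : X, pY w = pY (xa a) ∧ pYbar w = pYbar (ub b) := by
    intro a b
    obtain ⟨w, hw⟩ := hYY.1 (pY (xa a), pYbar (ub b))
    exact ⟨w, congrArg Prod.fst hw, congrArg Prod.snd hw⟩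
  choose W hW1 hW2 using hWex
  -- the splitting map
  refine ⟨fun p => ⟨pZ (W p.1 p.2), W p.1 p.2,
      ⟨xa p.1, ⟨hxa1 p.1, hxa2 p.1⟩, (hW1 p.1 p.2).symm⟩, rfl⟩, ⟨?_, ?_⟩, ?_, ?_, ?_⟩
  · -- injective
    rintro ⟨a, b⟩ ⟨a', b'⟩ h
    have hval : pZ (W a b) = pZ (W a' b') := congrArg Subtype.val h
    have hK := key_dist hYY hZZ x (xa a) (xa a') (ub b) (ub b') (W a b) (W a' b')
      (hxa1 a) (hxa2 a) (hxa1 a') (hxa2 a') (hub1 b) (hub1 b')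
      (hW1 a b) (hW2 a b) (hW1 a' b') (hW2 a' b')
    rw [hval, dist_self, hxa3 a, hxa3 a', hub2 b, hub2 b'] at hK
    have h1 : dist (a : Z) (a' : Z) = 0 := by
      nlinarith [dist_nonneg (x := (a : Z)) (y := (a' : Z)),
        dist_nonneg (x := (b : Z)) (y := (b' : Z)),
        sq_nonneg (dist (a : Z) (a' : Z)), sq_nonneg (dist (b : Z) (b' : Z))]
    have h2 : dist (b : Z) (b' : Z) = 0 := by
      nlinarith [dist_nonneg (x := (a : Z)) (y := (a' : Z)),
        dist_nonneg (x := (b : Z)) (y := (b' : Z))]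
    have : a = a' := Subtype.ext (dist_eq_zero.mp h1)
    have : b = b' := Subtype.ext (dist_eq_zero.mp h2)
    simp_all
  · -- surjective
    rintro ⟨c, s, hsT, rfl⟩
    obtain ⟨f, hfF, hfs⟩ := hsT
    set a : ↥(pZ '' (fiberThrough pYbar x ∩ fiberThrough pZbar x)) :=
      ⟨pZ f, f, hfF, rfl⟩ with ha
    obtain ⟨u, hu⟩ := hYY.1 (pY x, pYbar s)
    have hu1 : pY u = pY x := congrArg Prod.fst hu
    have hu2 : pYbar u = pYbar s := congrArg Prod.snd hu
    set b : ↥(pZ '' fiberThrough pY x) := ⟨pZ u, u, hu1, rfl⟩ with hb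
    have hK := key_dist hYY hZZ x (xa a) f (ub b) u (W a b) s
      (hxa1 a) (hxa2 a) hfF.1 hfF.2 (hub1 b) hu1
      (hW1 a b) (hW2 a b) hfs.symm hu2.symm
    rw [hxa3 a, hub2 b] at hK
    have e1 : dist (pZ f : Z) (pZ f) = 0 := dist_self _
    have e2 : dist (pZ u : Z) (pZ u) = 0 := dist_self _
    have hK0 : dist (pZ (W a b)) (pZ s) ^ 2 = 0 := by
      have : (a : Z) = pZ f := rfl
      have : (b : Z) = pZ u := rfl
      simp only [ha, hb] at hK
      simpa [dist_self] using hK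
    have : pZ (W a b) = pZ s := dist_eq_zero.mp ((pow_eq_zero_iff (two_ne_zero)).mp hK0)
    exact ⟨(a, b), Subtype.ext this⟩
  · -- Pythagoras
    rintro ⟨a, b⟩ ⟨a', b'⟩
    have hK := key_dist hYY hZZ x (xa a) (xa a') (ub b) (ub b') (W a b) (W a' b')
      (hxa1 a) (hxa2 a) (hxa1 a') (hxa2 a') (hub1 b) (hub1 b')
      (hW1 a b) (hW2 a b) (hW1 a' b') (hW2 a' b')
    rw [hxa3 a, hxa3 a', hub2 b, hub2 b'] at hK
    simpa [Subtype.dist_eq] using hK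
  · -- right unit
    intro a
    set b₀ : ↥(pZ '' fiberThrough pY x) := ⟨pZ x, hz₂⟩ with hb₀
    have hK := key_dist hYY hZZ x (xa a) (xa a) (ub b₀) x (W a b₀) (xa a)
      (hxa1 a) (hxa2 a) (hxa1 a) (hxa2 a) (hub1 b₀) rfl
      (hW1 a b₀) (hW2 a b₀) rfl (hxa1 a)
    rw [hub2 b₀, dist_self] at hK
    have hb0 : (b₀ : Z) = pZ x := rfl
    rw [hb0, dist_self] at hK
    have : pZ (W a b₀) = pZ (xa a) := by
      have h0 : dist (pZ (W a b₀)) (pZ (xa a)) ^ 2 = 0 := by linarith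
      exact dist_eq_zero.mp ((pow_eq_zero_iff (two_ne_zero)).mp h0)
    show pZ (W a b₀) = (a : Z)
    rw [this, hxa3 a]
  · -- left unit
    intro b
    set a₀ : ↥(pZ '' (fiberThrough pYbar x ∩ fiberThrough pZbar x)) := ⟨pZ x, hz₁⟩ with ha₀
    have hK := key_dist hYY hZZ x (xa a₀) x (ub b) (ub b) (W a₀ b) (ub b)
      (hxa1 a₀) (hxa2 a₀) rfl rfl (hub1 b) (hub1 b)
      (hW1 a₀ b) (hW2 a₀ b) (hub1 b) rfl
    rw [hxa3 a₀] at hK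
    have ha0 : (a₀ : Z) = pZ x := rfl
    rw [ha0] at hK
    simp only [dist_self] at hK
    have : pZ (W a₀ b) = pZ (ub b) := by
      have h0 : dist (pZ (W a₀ b)) (pZ (ub b)) ^ 2 = 0 := by
        rw [hK]; ring
      exact dist_eq_zero.mp ((pow_eq_zero_iff (two_ne_zero)).mp h0)
    show pZ (W a₀ b) = (b : Z)
    rw [this, hub2 b]
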